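/- For positive integers m ≤ n, the sum over all tuples (m_1, ..., m_t) of positive integers (of any length t ≥ 1) with m_1 + ... + m_t = m of (-1)^t · C(n - m_1, m_1 - 1) · C(n - m_2, m_2) ⋯ C(n - m_t, m_t) equals (-1)^m · C_{m-1}, where C_{m-1} is the (m-1)-st Catalan number. -/

import Mathlib

/-- The weight of a composition `l = (m₁, …, m_t)` of `m`: `(-1)^t` times
`C(n - m₁, m₁ - 1)` for the first part and `C(n - mᵢ, mᵢ)` for the rest. -/
def compWeight (n : ℕ) (l : List ℕ) : ℤ :=
  (-1) ^ l.length * ((n - l.headI).choose (l.headI - 1) : ℤ) *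
    (l.tail.map fun mi => ((n - mi).choose mi : ℤ)).prod


open Finset

/-- Triangle sum swap. -/
lemma tri_swap (m : ℕ) (g : ℕ → ℕ → ℤ) :
    ∑ k ∈ range m, ∑ j ∈ range (k+1), g j k
      = ∑ j ∈ range m, ∑ i ∈ range (m-j), g j (j+i) := by
  induction m with
  | zero => simp
  | succ m ih =>
    have h1 : ∀ j ∈ range m, ∑ i ∈ range (m+1-j), g j (j+i)
        = (∑ i ∈ range (m-j), g j (j+i)) + g j m := by
      intro j hj
      rw [mem_range] at hj
      have h2 : m + 1 - j = (m - j) + 1 := by omega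
      rw [h2, sum_range_succ]
      have h3 : j + (m - j) = m := by omega
      rw [h3]
    rw [sum_range_succ, ih]
    conv_rhs => rw [sum_range_succ]
    rw [sum_congr rfl h1, sum_add_distrib]
    have h4 : m + 1 - m = 1 := by omega
    rw [h4, sum_range_one, sum_range_succ]
    have h5 : m + 0 = m := by omega
    rw [h5]
    ring

lemma catJ (M : ℕ) : ∀ N : ℕ,
    ∑ j ∈ range (M+1), (-1:ℤ)^j * catalan j * ((N+j+1).choose (M-j)) = N.choose M := by
  induction M using Nat.strong_induction_on with
  | _ M ih =>
    intro N
    match M with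
    | 0 => simp
    | (M+1) =>
      rw [sum_range_succ']
      have hcat : ∀ i : ℕ, (catalan (i+1) : ℤ)
          = ∑ a ∈ range (i+1), (catalan a : ℤ) * catalan (i - a) := by
        intro i
        rw [catalan_succ]
        push_cast
        exact Fin.sum_univ_eq_sum_range (fun a => (catalan a : ℤ) * (catalan (i-a) : ℤ)) (i+1)
      have hmid : ∑ i ∈ range (M+1),
          (-1:ℤ)^(i+1) * catalan (i+1) * ((N+(i+1)+1).choose (M+1-(i+1)))
          = -(N.choose M : ℤ) := by
        have e1 : ∀ i ∈ range (M+1),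
            (-1:ℤ)^(i+1) * catalan (i+1) * ((N+(i+1)+1).choose (M+1-(i+1)))
            = ∑ a ∈ range (i+1),
                -((-1:ℤ)^a * catalan a * ((-1:ℤ)^(i-a) * catalan (i-a) *
                  ((N+i+2).choose (M-i)))) := by
          intro i hi
          rw [mem_range] at hi
          rw [hcat i, Finset.mul_sum, Finset.sum_mul]
          apply sum_congr rfl
          intro a ha
          rw [mem_range] at ha
          have h2 : (-1:ℤ)^(i+1) = -((-1:ℤ)^a * (-1:ℤ)^(i-a)) := by
            rw [← pow_add]
            have : a + (i - a) = i := by omega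
            rw [this, pow_succ]
            ring
          rw [h2]
          have h3 : N+(i+1)+1 = N+i+2 := by omega
          have h4 : M+1-(i+1) = M-i := by omega
          rw [h3, h4]
          ring
        rw [sum_congr rfl e1]
        rw [tri_swap (M+1) (fun a i => -((-1:ℤ)^a * catalan a * ((-1:ℤ)^(i-a) * catalan (i-a) * ((N+i+2).choose (M-i)))))]
        have e2 : ∀ a ∈ range (M+1), ∑ b ∈ range (M+1-a),
            -((-1:ℤ)^a * catalan a * ((-1:ℤ)^((a+b)-a) * catalan ((a+b)-a) *
              ((N+(a+b)+2).choose (M-(a+b)))))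
            = -((-1:ℤ)^a * catalan a * ((N+a+1).choose (M-a))) := by
          intro a ha
          rw [mem_range] at ha
          have e3 : ∀ b ∈ range (M+1-a),
              -((-1:ℤ)^a * catalan a * ((-1:ℤ)^((a+b)-a) * catalan ((a+b)-a) *
                ((N+(a+b)+2).choose (M-(a+b)))))
              = -((-1:ℤ)^a * catalan a) * ((-1:ℤ)^b * catalan b *
                  (((N+a+1)+b+1).choose ((M-a)-b))) := by
            intro b hb
            rw [mem_range] at hb
            have h5 : a + b - a = b := by omega
            have h6 : M - (a+b) = (M-a) - b := by omega
            have h7 : N+(a+b)+2 = (N+a+1)+b+1 := by omega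
            rw [h5, h6, h7]
            ring
          rw [sum_congr rfl e3, ← Finset.mul_sum]
          have h8 : M + 1 - a = (M - a) + 1 := by omega
          rw [h8, ih (M-a) (by omega) (N+a+1)]
          ring
        rw [sum_congr rfl e2]
        have : ∀ a ∈ range (M+1), -((-1:ℤ)^a * catalan a * ((N+a+1).choose (M-a)))
            = -(((-1:ℤ)^a * catalan a * ((N+a+1).choose (M-a)))) := fun a _ => rfl
        rw [Finset.sum_neg_distrib, ih M (by omega) N]
      rw [hmid]
      have hch : ((N+1).choose (M+1) : ℤ) = N.choose M + N.choose (M+1) := by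
        rw [Nat.choose_succ_succ]
        push_cast
        ring
      simp only [pow_zero, one_mul, catalan_zero, Nat.cast_one, Nat.add_zero, Nat.sub_zero]
      rw [hch]
      ring

lemma headI_cons_tail {l : List ℕ} (h : l ≠ []) : l.headI :: l.tail = l := by
  cases l with
  | nil => exact absurd rfl h
  | cons a t => rfl

lemma blocks_ne_nil {m : ℕ} (c : Composition (m+1)) : c.blocks ≠ [] := by
  intro h
  have := c.blocks_sum
  rw [h] at this
  simp at this

lemma headI_pos {m : ℕ} (c : Composition (m+1)) : 0 < c.blocks.headI := by
  apply c.blocks_pos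
  conv => rw [← headI_cons_tail (blocks_ne_nil c)]
  exact List.mem_cons_self

lemma headI_add_tail_sum {m : ℕ} (c : Composition (m+1)) :
    c.blocks.headI + c.blocks.tail.sum = m + 1 := by
  conv_rhs => rw [← c.blocks_sum, ← headI_cons_tail (blocks_ne_nil c)]
  rfl

/-- Splitting a composition of `m+1` into its first block `k+1` and a composition of `m-k`. -/
def firstBlockEquiv (m : ℕ) : Composition (m+1) ≃ Σ k : Fin (m+1), Composition (m - k) where
  toFun c :=
    ⟨⟨c.blocks.headI - 1, by have := headI_add_tail_sum c; have := headI_pos c; omega⟩,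
      ⟨c.blocks.tail,
        fun hi => c.blocks_pos (by
          conv => rw [← headI_cons_tail (blocks_ne_nil c)]
          exact List.mem_cons_of_mem _ hi),
        by have := headI_add_tail_sum c; have := headI_pos c; simp only; omega⟩⟩
  invFun p :=
    ⟨(p.1.val + 1) :: p.2.blocks,
      by
        intro i hi
        rcases List.mem_cons.1 hi with h | h
        · omega
        · exact p.2.blocks_pos h,
      by
        have := p.2.blocks_sum
        have := p.1.isLt
        simp only [List.sum_cons, this]
        omega⟩
  left_inv c := by
    apply Composition.ext
    simp only
    have h1 := headI_pos c
    have h2 : c.blocks.headI - 1 + 1 = c.blocks.headI := by omega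
    rw [h2, headI_cons_tail (blocks_ne_nil c)]
  right_inv p := rfl

lemma comp_sum_succ (m : ℕ) (f : List ℕ → ℤ) :
    ∑ c : Composition (m+1), f c.blocks
      = ∑ k ∈ range (m+1), ∑ d : Composition (m-k), f ((k+1) :: d.blocks) := by
  rw [← Equiv.sum_comp (firstBlockEquiv m).symm (fun c => f c.blocks), ← Finset.univ_sigma_univ, Finset.sum_sigma]
  rw [← Fin.sum_univ_eq_sum_range (fun k => ∑ d : Composition (m-k), f ((k+1) :: d.blocks)) (m+1)]
  apply Fintype.sum_congr
  intro k
  apply Fintype.sum_congr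
  intro d
  rfl

lemma comp_sum_zero (f : List ℕ → ℤ) : ∑ c : Composition 0, f c.blocks = f [] := by
  have h : ∀ c : Composition 0, c.blocks = [] := by
    intro c
    cases hb : c.blocks with
    | nil => rfl
    | cons a t =>
      exfalso
      have hs := c.blocks_sum
      have ha := c.blocks_pos (by rw [hb]; exact List.mem_cons_self)
      rw [hb] at hs
      simp at hs
      omega
  have : ∑ c : Composition 0, f c.blocks = ∑ _c : Composition 0, f [] :=
    Fintype.sum_congr _ _ (fun c => by rw [h c])
  rw [this, Finset.sum_const, Finset.card_univ, composition_card]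
  simp

def T (n : ℕ) : ℕ → ℤ
  | 0 => 1
  | (m+1) => ∑ k ∈ Finset.range (m+1), (-(((n - (k+1)).choose (k+1) : ℕ) : ℤ)) * T n (m - k)
  decreasing_by simp_wf

lemma T_succ (n m : ℕ) :
    T n (m+1) = ∑ k ∈ Finset.range (m+1), (-(((n - (k+1)).choose (k+1) : ℕ) : ℤ)) * T n (m - k) := by
  rw [T]

lemma U_succ (n r : ℕ) :
    ∑ i ∈ range (r+2), ((n-i).choose i : ℤ) * T n (r+1-i) = 0 := by
  rw [sum_range_succ']
  have h1 : ∀ i ∈ range (r+1),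
      ((n-(i+1)).choose (i+1) : ℤ) * T n (r+1-(i+1))
      = -((-(((n - (i+1)).choose (i+1) : ℕ) : ℤ)) * T n (r - i)) := by
    intro i hi
    have : r + 1 - (i+1) = r - i := by omega
    rw [this]
    ring
  rw [sum_congr rfl h1, Finset.sum_neg_distrib, ← T_succ]
  simp [T]

lemma sum_comp_T (n : ℕ) : ∀ m : ℕ,
    ∑ c : Composition m,
      ((-1:ℤ)^c.blocks.length * (c.blocks.map fun i => ((n-i).choose i : ℤ)).prod) = T n m := by
  intro m
  induction m using Nat.strong_induction_on with
  | _ m ih =>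
    match m with
    | 0 =>
      rw [comp_sum_zero (fun l => (-1:ℤ)^l.length * (l.map fun i => ((n-i).choose i : ℤ)).prod)]
      simp [T]
    | (m+1) =>
      rw [comp_sum_succ m (fun l => (-1:ℤ)^l.length * (l.map fun i => ((n-i).choose i : ℤ)).prod)]
      rw [T_succ]
      apply sum_congr rfl
      intro k hk
      rw [← ih (m-k) (by rw [mem_range] at hk; omega)]
      rw [Finset.mul_sum]
      apply Fintype.sum_congr
      intro d
      simp only [List.length_cons, List.map_cons, List.prod_cons, pow_succ]
      ring

theorem sauermann_wigderson' (m n : ℕ) (hm : 1 ≤ m) (hmn : m ≤ n) :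
    ∑ c : Composition m, ((-1:ℤ) ^ c.blocks.length * ((n - c.blocks.headI).choose (c.blocks.headI - 1) : ℤ) *
    (c.blocks.tail.map fun mi => ((n - mi).choose mi : ℤ)).prod) = (-1) ^ m * catalan (m - 1) := by
  obtain ⟨m', rfl⟩ : ∃ m', m = m' + 1 := ⟨m - 1, by omega⟩
  rw [comp_sum_succ m' (fun l => (-1:ℤ)^l.length * ((n - l.headI).choose (l.headI - 1) : ℤ) *
    (l.tail.map fun mi => ((n - mi).choose mi : ℤ)).prod)]
  have h1 : ∀ k ∈ range (m'+1),
      (∑ d : Composition (m'-k),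
        ((-1:ℤ)^(((k+1) :: d.blocks).length) * ((n - ((k+1) :: d.blocks).headI).choose (((k+1) :: d.blocks).headI - 1) : ℤ) *
        ((((k+1) :: d.blocks).tail).map fun mi => ((n - mi).choose mi : ℤ)).prod))
      = -(((n-(k+1)).choose k : ℤ)) * T n (m'-k) := by
    intro k hk
    rw [← sum_comp_T n (m'-k), Finset.mul_sum]
    apply Fintype.sum_congr
    intro d
    simp only [List.length_cons, List.headI_cons, List.tail_cons, pow_succ, Nat.add_sub_cancel]
    ring
  rw [sum_congr rfl h1]
  -- rewrite the choose via catJ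
  have h2 : ∀ k ∈ range (m'+1),
      -(((n-(k+1)).choose k : ℤ)) * T n (m'-k)
      = ∑ j ∈ range (k+1),
          -((-1:ℤ)^j * catalan j * (((n-(k+1))+j+1).choose (k-j)) * T n (m'-k)) := by
    intro k hk
    rw [← catJ k (n-(k+1)), neg_mul, Finset.sum_mul, ← Finset.sum_neg_distrib]
  rw [sum_congr rfl h2]
  rw [tri_swap (m'+1) (fun j k => -((-1:ℤ)^j * catalan j * (((n-(k+1))+j+1).choose (k-j)) * T n (m'-k)))]
  have h3 : ∀ j ∈ range (m'+1),
      (∑ i ∈ range (m'+1-j),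
        -((-1:ℤ)^j * catalan j * (((n-((j+i)+1))+j+1).choose ((j+i)-j)) * T n (m'-(j+i))))
      = -((-1:ℤ)^j * catalan j) * (if j = m' then 1 else 0) := by
    intro j hj
    rw [mem_range] at hj
    have e1 : ∀ i ∈ range (m'+1-j),
        -((-1:ℤ)^j * catalan j * (((n-((j+i)+1))+j+1).choose ((j+i)-j)) * T n (m'-(j+i)))
        = -((-1:ℤ)^j * catalan j) * (((n-i).choose i : ℤ) * T n ((m'-j)-i)) := by
      intro i hi
      rw [mem_range] at hi
      have e2 : (n-((j+i)+1))+j+1 = n - i := by omega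
      have e3 : (j+i)-j = i := by omega
      have e4 : m'-(j+i) = (m'-j)-i := by omega
      rw [e2, e3, e4]
      ring
    rw [sum_congr rfl e1, ← Finset.mul_sum]
    congr 1
    by_cases hjm : j = m'
    · subst hjm
      simp [T]
    · have e5 : m'+1-j = (m'-j-1)+2 := by omega
      rw [if_neg hjm, e5]
      have e7 : ∑ i ∈ range ((m'-j-1)+2), ((n-i).choose i : ℤ) * T n ((m'-j)-i)
          = ∑ i ∈ range ((m'-j-1)+2), ((n-i).choose i : ℤ) * T n ((m'-j-1)+1-i) := by
        apply sum_congr rfl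
        intro i _
        rw [show (m'-j)-i = (m'-j-1)+1-i from by omega]
      rw [e7]
      exact U_succ n (m'-j-1)
  rw [sum_congr rfl h3]
  have h4 : ∑ j ∈ range (m'+1), -((-1:ℤ)^j * catalan j) * (if j = m' then 1 else 0)
      = -((-1:ℤ)^m' * catalan m') := by
    rw [Finset.sum_eq_single m' (fun b _ hb => by rw [if_neg hb, mul_zero])
      (fun h => absurd (mem_range.2 (by omega)) h), if_pos rfl, mul_one]
  rw [h4]
  simp only [Nat.add_sub_cancel]
  ring


theorem sauermann_wigderson (m n : ℕ) (hm : 1 ≤ m) (hmn : m ≤ n) :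
    ∑ c : Composition m, compWeight n c.blocks = (-1) ^ m * catalan (m - 1) := by
  have := sauermann_wigderson' m n hm hmn
  simpa [compWeight] using this
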